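/- Let G be a locally finite connected graph and (A,B) a separation of finite order that distinguishes some two regular profiles in G efficiently. Then G has only finitely many tight separations of order at most |(A,B)| that cross (A,B). -/

import Mathlib

/-- A separation of a graph `G`: a pair of vertex sets covering `V` with no edge
between `A ∖ B` and `B ∖ A`. -/
structure GraphSep {V : Type} (G : SimpleGraph V) where
  A : Set V
  B : Set V
  union_eq : A ∪ B = Set.univ
  no_edge : ∀ a ∈ A \ B, ∀ b ∈ B \ A, ¬ G.Adj a b

namespace GraphSep

variable {V V' : Type} {G : SimpleGraph V} {G' : SimpleGraph V'}

/-- The inverse `(B,A)` of a separation `(A,B)`. -/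
def inv (s : GraphSep G) : GraphSep G where
  A := s.B
  B := s.A
  union_eq := by rw [Set.union_comm]; exact s.union_eq
  no_edge := fun a ha b hb h => s.no_edge b hb a ha h.symm

/-- The separator `A ∩ B`. -/
def sepSet (s : GraphSep G) : Set V := s.A ∩ s.B

/-- The order `|A ∩ B|` of a separation, as an extended natural number. -/
noncomputable def order (s : GraphSep G) : ℕ∞ := (s.A ∩ s.B).encard

/-- `(A,B) ≤ (C,D)` iff `A ⊆ C` and `D ⊆ B`. -/
protected def le (s t : GraphSep G) : Prop := s.A ⊆ t.A ∧ t.B ⊆ s.B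

/-- Two separations are nested if after possibly replacing either by its inverse
they are `≤`-comparable. -/
def Nested (s t : GraphSep G) : Prop :=
  s.le t ∨ s.le t.inv ∨ s.inv.le t ∨ s.inv.le t.inv

lemma mem_A_or_B (s : GraphSep G) (x : V) : x ∈ s.A ∨ x ∈ s.B := by
  have h : x ∈ s.A ∪ s.B := by rw [s.union_eq]; exact Set.mem_univ x
  exact (Set.mem_union _ _ _).1 h

/-- The join `(A,B) ∨ (C,D) = (A ∪ C, B ∩ D)`. -/
def join (s t : GraphSep G) : GraphSep G where
  A := s.A ∪ t.A
  B := s.B ∩ t.B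
  union_eq := by
    apply Set.eq_univ_of_forall
    intro x
    rcases s.mem_A_or_B x with h1 | h1
    · exact Or.inl (Or.inl h1)
    · rcases t.mem_A_or_B x with h2 | h2
      · exact Or.inl (Or.inr h2)
      · exact Or.inr ⟨h1, h2⟩
  no_edge := by
    rintro a ⟨haA, haB⟩ b ⟨hbB, hbA⟩ hadj
    by_cases hsB : a ∈ s.B
    · have hatB : a ∉ t.B := fun h => haB ⟨hsB, h⟩
      have hatA : a ∈ t.A := (t.mem_A_or_B a).resolve_right hatB
      exact t.no_edge a ⟨hatA, hatB⟩ b ⟨hbB.2, fun h => hbA (Or.inr h)⟩ hadj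
    · have hasA : a ∈ s.A := (s.mem_A_or_B a).resolve_right hsB
      exact s.no_edge a ⟨hasA, hsB⟩ b ⟨hbB.1, fun h => hbA (Or.inl h)⟩ hadj

/-- The image of a separation under a graph isomorphism. -/
def map (φ : G ≃g G') (s : GraphSep G) : GraphSep G' where
  A := ⇑φ '' s.A
  B := ⇑φ '' s.B
  union_eq := by
    apply Set.eq_univ_of_forall
    intro y
    rcases s.mem_A_or_B (φ.symm y) with h | h
    · exact Or.inl ⟨φ.symm y, h, φ.apply_symm_apply y⟩
    · exact Or.inr ⟨φ.symm y, h, φ.apply_symm_apply y⟩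
  no_edge := by
    rintro a ⟨⟨x, hxA, rfl⟩, haB⟩ b ⟨⟨y, hyB, rfl⟩, hbA⟩ hadj
    exact s.no_edge x ⟨hxA, fun h => haB ⟨x, h, rfl⟩⟩ y ⟨hyB, fun h => hbA ⟨y, h, rfl⟩⟩
      (φ.map_adj_iff.mp hadj)

/-- The neighbourhood of a set of vertices. -/
def nbhd (G : SimpleGraph V) (X : Set V) : Set V := {v | v ∉ X ∧ ∃ x ∈ X, G.Adj v x}

/-- `w` can be reached from `v` by a walk avoiding `X`. -/
def AvoidReach (G : SimpleGraph V) (X : Set V) (v w : V) : Prop :=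
  ∃ p : G.Walk v w, ∀ u ∈ p.support, u ∉ X

/-- `C` is a (connected) component of `G − X`. -/
def IsCompOf (G : SimpleGraph V) (X C : Set V) : Prop :=
  ∃ v, v ∉ X ∧ C = {w | AvoidReach G X v w}

/-- A separation `(A,B)` is tight if each of `A ∖ B` and `B ∖ A` contains a component
of `G − (A ∩ B)` whose neighbourhood is all of `A ∩ B`. -/
def IsTight (s : GraphSep G) : Prop :=
  (∃ C, IsCompOf G s.sepSet C ∧ nbhd G C = s.sepSet ∧ C ⊆ s.A \ s.B) ∧
  (∃ C, IsCompOf G s.sepSet C ∧ nbhd G C = s.sepSet ∧ C ⊆ s.B \ s.A)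

/-- An orientation of `S_k`: it contains only separations of order `< k`, contains
at least one of `s, s⁻¹` for every separation of order `< k`, and contains both only
if they coincide. -/
def IsOrientation (k : ℕ∞) (P : Set (GraphSep G)) : Prop :=
  (∀ s ∈ P, s.order < k) ∧
  (∀ s : GraphSep G, s.order < k → (s ∈ P ∨ s.inv ∈ P)) ∧
  (∀ s ∈ P, s.inv ∈ P → s.inv = s)

/-- Consistency: no two members `r, s` with distinct underlying separations satisfy
`r⁻¹ ≤ s`. -/
def Consistent (P : Set (GraphSep G)) : Prop :=
  ∀ r ∈ P, ∀ s ∈ P, r.inv.le s → r = s ∨ r = s.inv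

/-- A `k`-profile: a consistent orientation of `S_k` satisfying the profile property. -/
def IsProfile (k : ℕ∞) (P : Set (GraphSep G)) : Prop :=
  IsOrientation k P ∧ Consistent P ∧ ∀ s ∈ P, ∀ t ∈ P, (s.join t).inv ∉ P

/-- A profile in `G` is a `k`-profile for some `k ∈ ℕ ∪ {ℵ₀}`. -/
def IsProfileIn (G : SimpleGraph V) (P : Set (GraphSep G)) : Prop := ∃ k : ℕ∞, IsProfile k P

/-- A profile is regular if it contains no separation of the form `(V, X)`. -/
def RegularP (P : Set (GraphSep G)) : Prop := ∀ s ∈ P, s.A ≠ Set.univ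

/-- A profile is bounded if it is a `k`-profile for some finite `k` and is not a subset
of any `ℵ₀`-profile. -/
def BoundedP (P : Set (GraphSep G)) : Prop :=
  (∃ k : ℕ, IsProfile (k : ℕ∞) P) ∧ ∀ Q : Set (GraphSep G), IsProfile ⊤ Q → ¬ P ⊆ Q

/-- `s` distinguishes the profiles `P` and `P'`. -/
def Distinguishes (s : GraphSep G) (P P' : Set (GraphSep G)) : Prop :=
  (s ∈ P ∧ s.inv ∈ P') ∨ (s.inv ∈ P ∧ s ∈ P')

/-- `s` distinguishes `P` and `P'` efficiently: it has minimum order among all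
separations distinguishing `P` and `P'`. -/
def EffDist (s : GraphSep G) (P P' : Set (GraphSep G)) : Prop :=
  Distinguishes s P P' ∧ ∀ t : GraphSep G, Distinguishes t P P' → s.order ≤ t.order

/-- `P` and `P'` are distinguishable: some finite-order separation distinguishes them. -/
def Distinguishable (P P' : Set (GraphSep G)) : Prop :=
  ∃ s : GraphSep G, s.order < ⊤ ∧ Distinguishes s P P'

/-- Robustness of a profile. -/
def RobustP (P : Set (GraphSep G)) : Prop :=
  ∀ s ∈ P, ∀ t : GraphSep G, t.order < ⊤ →
    (s.join t).order < s.order → (s.join t.inv).order < s.order →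
    (s.join t ∈ P ∨ s.join t.inv ∈ P)

/-- A `k`-profile is principal if for every vertex set `X` with `|X| < k` it contains
`(V ∖ C, C ∪ X)` for some component `C` of `G − X`. -/
def PrincipalP (k : ℕ∞) (P : Set (GraphSep G)) : Prop :=
  ∀ X : Set V, X.encard < k →
    ∃ C, IsCompOf G X C ∧ ∃ s ∈ P, s.A = Cᶜ ∧ s.B = C ∪ X

/-- `c` is a corner separation of `s` and `t`. -/
def IsCornerSep (s t c : GraphSep G) : Prop :=
  ∃ s' ∈ ({s, s.inv} : Set (GraphSep G)), ∃ t' ∈ ({t, t.inv} : Set (GraphSep G)),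
    c = s'.join t' ∨ c = (s'.join t').inv

/-- The set `S ⊆ V ∖ {x,y}` separates `x` from `y` in `G`. -/
def SeparatesIn (G : SimpleGraph V) (x y : V) (S : Set V) : Prop :=
  x ∉ S ∧ y ∉ S ∧ ∀ p : G.Walk x y, ∃ u ∈ p.support, u ∈ S

/-- `S` is a `⊆`-minimal `x`–`y`-separator in `G`. -/
def MinSeparator (G : SimpleGraph V) (x y : V) (S : Set V) : Prop :=
  SeparatesIn G x y S ∧ ∀ S' ⊆ S, SeparatesIn G x y S' → S' = S

/-- The separation of `G` induced by an (oriented) edge of a tree-decomposition. -/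
def InducedSep {ι : Type} (T : SimpleGraph ι) (𝒱 : ι → Set V) (x : GraphSep G) : Prop :=
  ∃ t t' : ι, T.Adj t t' ∧
    x.A = (⋃ u ∈ {u : ι | ∃ p : T.Walk u t, s(t, t') ∉ p.edges}, 𝒱 u) ∧
    x.B = (⋃ u ∈ {u : ι | ∃ p : T.Walk u t', s(t, t') ∉ p.edges}, 𝒱 u)

/-- Opposite pairs of corner separations of `s` and `t`. -/
def OppPair (s t c d : GraphSep G) : Prop :=
  (c = s.join t ∧ d = s.inv.join t.inv) ∨ (c = s.inv.join t.inv ∧ d = s.join t) ∨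
  (c = s.join t.inv ∧ d = s.inv.join t) ∨ (c = s.inv.join t ∧ d = s.join t.inv)

end GraphSep

open GraphSep

namespace Stmt16
variable {V : Type} {G : SimpleGraph V}

/-! ### AvoidReach basics -/

lemma ar_refl {X : Set V} {v : V} (hv : v ∉ X) : AvoidReach G X v v :=
  ⟨SimpleGraph.Walk.nil, by simp [hv]⟩

lemma ar_not_mem_left {X : Set V} {v w : V} (h : AvoidReach G X v w) : v ∉ X := by
  obtain ⟨p, hp⟩ := h; exact hp v p.start_mem_support

lemma ar_not_mem_right {X : Set V} {v w : V} (h : AvoidReach G X v w) : w ∉ X := by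
  obtain ⟨p, hp⟩ := h; exact hp w p.end_mem_support

lemma ar_symm {X : Set V} {v w : V} (h : AvoidReach G X v w) : AvoidReach G X w v := by
  obtain ⟨p, hp⟩ := h
  exact ⟨p.reverse, by intro u hu; rw [SimpleGraph.Walk.support_reverse, List.mem_reverse] at hu; exact hp u hu⟩

lemma ar_trans {X : Set V} {u v w : V} (h1 : AvoidReach G X u v) (h2 : AvoidReach G X v w) :
    AvoidReach G X u w := by
  obtain ⟨p, hp⟩ := h1; obtain ⟨q, hq⟩ := h2
  refine ⟨p.append q, fun x hx => ?_⟩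
  rw [SimpleGraph.Walk.mem_support_append_iff] at hx
  rcases hx with hx | hx
  · exact hp x hx
  · exact hq x hx

lemma ar_adj {X : Set V} {v u w : V} (h : AvoidReach G X v u) (ha : G.Adj u w) (hw : w ∉ X) :
    AvoidReach G X v w := by
  obtain ⟨p, hp⟩ := h
  refine ⟨p.concat ha, fun x hx => ?_⟩
  rw [SimpleGraph.Walk.support_concat, List.mem_append] at hx
  rcases hx with hx | hx
  · exact hp x hx
  · simp at hx; subst hx; exact hw

lemma ar_mono {X X' : Set V} {v w : V} (hX : X' ⊆ X) (h : AvoidReach G X v w) :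
    AvoidReach G X' v w := by
  obtain ⟨p, hp⟩ := h; exact ⟨p, fun u hu hmem => hp u hu (hX hmem)⟩

/-- Every vertex on an avoiding walk is avoid-reachable from the start. -/
lemma ar_of_mem_support {X : Set V} : ∀ {a b : V} (p : G.Walk a b),
    (∀ u ∈ p.support, u ∉ X) → ∀ u ∈ p.support, AvoidReach G X a u := by
  intro a b p
  induction p with
  | nil =>
    intro hp u hu
    simp at hu; subst hu; exact ar_refl (hp _ (by simp))
  | @cons a c b h p ih =>
    intro hp u hu
    rw [SimpleGraph.Walk.support_cons, List.mem_cons] at hu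
    have ha : a ∉ X := hp a (by simp)
    have hc : c ∉ X := hp c (by rw [SimpleGraph.Walk.support_cons]; exact List.mem_cons_of_mem _ p.start_mem_support)
    have hac : AvoidReach G X a c := ar_adj (ar_refl ha) h hc
    rcases hu with rfl | hu
    · exact ar_refl ha
    · exact ar_trans hac (ih (fun x hx => hp x (by rw [SimpleGraph.Walk.support_cons]; exact List.mem_cons_of_mem _ hx)) u hu)

/-! ### Components -/

/-- The component of `G - X` containing `v`. -/
def comp (G : SimpleGraph V) (X : Set V) (v : V) : Set V := {w | AvoidReach G X v w}

lemma mem_comp_self {X : Set V} {v : V} (hv : v ∉ X) : v ∈ comp G X v := ar_refl hv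

lemma comp_isCompOf {X : Set V} {v : V} (hv : v ∉ X) : IsCompOf G X (comp G X v) :=
  ⟨v, hv, rfl⟩

lemma comp_disjoint {X : Set V} {v w : V} (hw : w ∈ comp G X v) : w ∉ X := ar_not_mem_right hw

lemma comp_eq_of_mem {X : Set V} {v w : V} (hw : w ∈ comp G X v) : comp G X w = comp G X v := by
  ext u
  constructor
  · intro hu; exact ar_trans hw hu
  · intro hu; exact ar_trans (ar_symm hw) hu

lemma isCompOf_eq_comp {X C : Set V} (hC : IsCompOf G X C) {w : V} (hw : w ∈ C) :
    C = comp G X w := by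
  obtain ⟨v, hv, rfl⟩ := hC
  exact (comp_eq_of_mem hw).symm

lemma comp_nonempty {X : Set V} {C : Set V} (hC : IsCompOf G X C) : C.Nonempty := by
  obtain ⟨v, hv, rfl⟩ := hC; exact ⟨v, mem_comp_self hv⟩

lemma isCompOf_disjoint {X C : Set V} (hC : IsCompOf G X C) : ∀ w ∈ C, w ∉ X := by
  obtain ⟨v, hv, rfl⟩ := hC; exact fun w hw => comp_disjoint hw

/-- Neighbourhood of a component is contained in `X`. -/
lemma nbhd_comp_subset {X C : Set V} (hC : IsCompOf G X C) : nbhd G C ⊆ X := by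
  obtain ⟨v, hv, rfl⟩ := hC
  rintro w ⟨hwC, x, hx, hadj⟩
  by_contra hwX
  exact hwC (ar_adj hx hadj.symm hwX)

/-- Walks starting in a set with empty neighbourhood stay in it. -/
lemma mem_of_walk_nbhd_empty {C : Set V} (h : nbhd G C = ∅) :
    ∀ {a b : V} (_ : G.Walk a b), a ∈ C → b ∈ C := by
  intro a b p
  induction p with
  | nil => exact id
  | @cons a c b hadj p ih =>
    intro ha
    have hc : c ∈ C := by
      by_contra hc
      have : c ∈ nbhd G C := ⟨hc, a, ha, hadj.symm⟩
      rw [h] at this; exact this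
    exact ih hc

/-- A nonempty set with empty neighbourhood is everything (in a connected graph). -/
lemma eq_univ_of_nbhd_empty (hG : G.Connected) {C : Set V} (hne : C.Nonempty)
    (h : nbhd G C = ∅) : C = Set.univ := by
  obtain ⟨v, hv⟩ := hne
  apply Set.eq_univ_of_forall
  intro w
  obtain ⟨p⟩ := hG.preconnected v w
  exact mem_of_walk_nbhd_empty h p hv

/-- The neighbourhood of a proper nonempty component is nonempty. -/
lemma nbhd_nonempty (hG : G.Connected) {C : Set V} (hne : C.Nonempty)
    (hproper : C ≠ Set.univ) : (nbhd G C).Nonempty := by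
  rcases Set.eq_empty_or_nonempty (nbhd G C) with h | h
  · exact absurd (eq_univ_of_nbhd_empty hG hne h) hproper
  · exact h

/-! ### Sidedness -/

lemma sepSet_inv (t : GraphSep G) : t.inv.sepSet = t.sepSet := Set.inter_comm _ _

lemma inv_inv (t : GraphSep G) : t.inv.inv = t := by cases t; rfl

lemma side_or (t : GraphSep G) {v : V} (hv : v ∉ t.sepSet) :
    v ∈ t.A \ t.B ∨ v ∈ t.B \ t.A := by
  rcases t.mem_A_or_B v with h | h
  · left; exact ⟨h, fun hB => hv ⟨h, hB⟩⟩
  · right; exact ⟨h, fun hA => hv ⟨hA, h⟩⟩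

/-- Along a walk avoiding the separator, one stays on the same side. -/
lemma walk_side (t : GraphSep G) : ∀ {a b : V} (p : G.Walk a b),
    (∀ u ∈ p.support, u ∉ t.sepSet) → a ∈ t.A \ t.B → b ∈ t.A \ t.B := by
  intro a b p
  induction p with
  | nil => exact fun _ => id
  | @cons a c b hadj p ih =>
    intro hp ha
    have hc : c ∉ t.sepSet := hp c (by rw [SimpleGraph.Walk.support_cons]; exact List.mem_cons_of_mem _ p.start_mem_support)
    have hcside : c ∈ t.A \ t.B := by
      rcases side_or t hc with h | h
      · exact h
      · exact absurd hadj (t.no_edge a ha c h)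
    exact ih (fun u hu => hp u (by rw [SimpleGraph.Walk.support_cons]; exact List.mem_cons_of_mem _ hu)) hcside

lemma comp_subset_side (t : GraphSep G) {v : V} (hv : v ∈ t.A \ t.B) :
    comp G t.sepSet v ⊆ t.A \ t.B := by
  intro w hw
  obtain ⟨p, hp⟩ := hw
  exact walk_side t p hp hv

lemma comp_subset_sideB (t : GraphSep G) {v : V} (hv : v ∈ t.B \ t.A) :
    comp G t.sepSet v ⊆ t.B \ t.A := by
  have : comp G t.inv.sepSet v ⊆ t.inv.A \ t.inv.B := comp_subset_side t.inv hv
  rwa [sepSet_inv] at this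

lemma comp_side_or (t : GraphSep G) {v : V} (hv : v ∉ t.sepSet) :
    comp G t.sepSet v ⊆ t.A \ t.B ∨ comp G t.sepSet v ⊆ t.B \ t.A := by
  rcases side_or t hv with h | h
  · exact Or.inl (comp_subset_side t h)
  · exact Or.inr (comp_subset_sideB t h)

/-- A component avoiding a smaller obstacle set is inside the corresponding component. -/
lemma comp_subset_comp {X Y : Set V} {v : V} (hd : ∀ u ∈ comp G Y v, u ∉ X) (hv : v ∉ Y) :
    comp G Y v ⊆ comp G X v := by
  intro w hw
  obtain ⟨p, hp⟩ := hw
  refine ⟨p, fun u hu => ?_⟩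
  exact hd u (ar_of_mem_support p hp u hu)

/-! ### Finiteness of components -/

lemma comps_finite (hG : G.Connected) (hlf : ∀ v : V, (G.neighborSet v).Finite)
    {X : Set V} (hX : X.Finite) : {C : Set V | IsCompOf G X C}.Finite := by
  rcases Set.eq_empty_or_nonempty X with rfl | hXne
  · -- every component is univ
    apply Set.Finite.subset (Set.finite_singleton Set.univ)
    intro C hC
    have h1 : nbhd G C = ∅ := by
      have := nbhd_comp_subset hC
      exact Set.eq_empty_of_subset_empty this
    exact eq_univ_of_nbhd_empty hG (comp_nonempty hC) h1
  · -- inject into the (finite) union of neighbourhoods of X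
    set NX : Set V := ⋃ x ∈ X, G.neighborSet x with hNX
    have hNXfin : NX.Finite := Set.Finite.biUnion hX (fun x _ => hlf x)
    have key : ∀ C ∈ {C : Set V | IsCompOf G X C}, ∃ u, u ∈ C ∧ u ∈ NX := by
      intro C hC
      have hproper : C ≠ Set.univ := by
        intro h
        obtain ⟨x, hx⟩ := hXne
        exact isCompOf_disjoint hC x (h ▸ Set.mem_univ x) hx
      obtain ⟨y, hy⟩ := nbhd_nonempty hG (comp_nonempty hC) hproper
      obtain ⟨hyC, c, hcC, hadj⟩ := hy
      have hyX : y ∈ X := nbhd_comp_subset hC ⟨hyC, c, hcC, hadj⟩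
      exact ⟨c, hcC, Set.mem_biUnion hyX hadj⟩
    classical
    have hne : Nonempty V := hG.nonempty
    set f : Set V → V := fun C => if h : ∃ u, u ∈ C ∧ u ∈ NX then h.choose else Classical.arbitrary V with hf
    apply Set.Finite.of_finite_image (f := f)
    · apply Set.Finite.subset hNXfin
      rintro y ⟨C, hC, rfl⟩
      have h : ∃ u, u ∈ C ∧ u ∈ NX := key C hC
      simp only [hf, dif_pos h]
      exact h.choose_spec.2
    · intro C1 h1 C2 h2 hf12
      have e1 : ∃ u, u ∈ C1 ∧ u ∈ NX := key C1 h1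
      have e2 : ∃ u, u ∈ C2 ∧ u ∈ NX := key C2 h2
      simp only [hf, dif_pos e1, dif_pos e2] at hf12
      have m1 : e1.choose ∈ C1 := e1.choose_spec.1
      have m2 : e2.choose ∈ C2 := e2.choose_spec.1
      rw [isCompOf_eq_comp h1 m1, isCompOf_eq_comp h2 m2, hf12]

/-! ### Separations with a fixed separator -/

lemma sep_ext {t1 t2 : GraphSep G} (hA : t1.A = t2.A) (hB : t1.B = t2.B) : t1 = t2 := by
  cases t1; cases t2
  cases hA; cases hB; rfl

lemma fiber_finite (hG : G.Connected) (hlf : ∀ v : V, (G.neighborSet v).Finite)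
    {Y : Set V} (hY : Y.Finite) : {t : GraphSep G | t.sepSet = Y}.Finite := by
  classical
  set F : GraphSep G → Set (Set V) := fun t => {Q | IsCompOf G Y Q ∧ Q ⊆ t.A} with hF
  apply Set.Finite.of_finite_image (f := F)
  · apply Set.Finite.subset (Set.Finite.finite_subsets (comps_finite hG hlf hY))
    rintro S ⟨t, ht, rfl⟩
    intro Q hQ
    exact hQ.1
  · rintro t1 h1 t2 h2 h12
    simp only [Set.mem_setOf_eq] at h1 h2
    -- key : a vertex on side A\B of one is on side A\B of the other
    have key : ∀ t1 t2 : GraphSep G, t1.sepSet = Y → t2.sepSet = Y → F t1 = F t2 →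
        ∀ a, a ∈ t1.A → a ∈ t2.A := by
      intro t1 t2 h1 h2 h12 a ha
      by_cases haB : a ∈ t1.B
      · have : a ∈ Y := h1 ▸ ⟨ha, haB⟩
        exact (h2 ▸ this : a ∈ t2.sepSet).1
      · have haY : a ∉ Y := fun h => haB (h1 ▸ h : a ∈ t1.sepSet).2
        have haside : a ∈ t1.A \ t1.B := ⟨ha, haB⟩
        have hQ1 : comp G Y a ⊆ t1.A \ t1.B := by
          have := comp_subset_side t1 haside; rwa [h1] at this
        have hmem : comp G Y a ∈ F t1 := by
          refine ⟨comp_isCompOf haY, fun u hu => (hQ1 hu).1⟩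
        rw [h12] at hmem
        exact hmem.2 (mem_comp_self haY)
    have hA12 : t1.A = t2.A :=
      Set.Subset.antisymm (fun a ha => key t1 t2 h1 h2 h12 a ha)
        (fun a ha => key t2 t1 h2 h1 h12.symm a ha)
    -- now B
    have keyB : ∀ t1 t2 : GraphSep G, t1.sepSet = Y → t2.sepSet = Y → t1.A = t2.A →
        ∀ b, b ∈ t1.B → b ∈ t2.B := by
      intro t1 t2 h1 h2 hA b hb
      rcases t2.mem_A_or_B b with h | h
      · have hbA : b ∈ t1.A := hA ▸ h
        have hy : b ∈ Y := h1 ▸ (⟨hbA, hb⟩ : b ∈ t1.sepSet)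
        have : b ∈ t2.sepSet := h2.symm ▸ hy
        exact this.2
      · exact h
    exact sep_ext hA12 (Set.Subset.antisymm
      (fun b hb => keyB t1 t2 h1 h2 hA12 b hb)
      (fun b hb => keyB t2 t1 h2 h1 hA12.symm b hb))

/-! ### Infinite pigeonhole -/

lemma exists_infinite_of_subset_biUnion {α ι : Type} {I : Set ι} (hI : I.Finite)
    {f : ι → Set α} {S : Set α} (hS : S.Infinite) (hsub : S ⊆ ⋃ i ∈ I, f i) :
    ∃ i ∈ I, (S ∩ f i).Infinite := by
  by_contra h
  push_neg at h
  apply hS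
  have : S ⊆ ⋃ i ∈ I, S ∩ f i := by
    intro a ha
    obtain ⟨_, ⟨i, rfl⟩, _, ⟨hi, rfl⟩, hmem⟩ := hsub ha
    exact Set.mem_biUnion hi ⟨ha, hmem⟩
  exact Set.Finite.subset (Set.Finite.biUnion hI (fun i hi => h i hi)) this

/-! ### Tight separators -/

/-- `Y` is the common neighbourhood of two disjoint components. -/
def TightPair (G : SimpleGraph V) (Y : Set V) : Prop :=
  ∃ C C', IsCompOf G Y C ∧ nbhd G C = Y ∧ IsCompOf G Y C' ∧ nbhd G C' = Y ∧ Disjoint C C'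

/-- In a locally finite connected graph, only finitely many tight separators of bounded
order contain a given nonempty finite set. -/
lemma tight_seps_finite (hG : G.Connected) (hlf : ∀ v : V, (G.neighborSet v).Finite)
    (n : ℕ) : ∀ (m : ℕ) (F : Set V), F.Finite → F.Nonempty → (n : ℕ∞) ≤ F.encard + m →
    {Y : Set V | TightPair G Y ∧ Y.encard ≤ n ∧ F ⊆ Y}.Finite := by
  intro m
  induction m with
  | zero =>
    intro F hF hFne hcard
    apply Set.Finite.subset (Set.finite_singleton F)
    rintro Y ⟨_, hYcard, hFY⟩
    have hc : Y.encard ≤ F.encard := hYcard.trans (by simpa using hcard)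
    have : F = Y := Set.Finite.eq_of_subset_of_encard_le hF hFY hc
    simp [← this]
  | succ m ih =>
    intro F hF hFne hcard
    by_contra hinf
    rw [← Set.not_infinite, not_not] at hinf
    obtain ⟨f, hfF⟩ := hFne
    set S := {Y : Set V | TightPair G Y ∧ Y.encard ≤ n ∧ F ⊆ Y} with hS
    -- fibres indexed by neighbours of f
    set Fib : V → V → Set (Set V) := fun x x' =>
      {Y | ∃ C C', IsCompOf G Y C ∧ nbhd G C = Y ∧ IsCompOf G Y C' ∧ nbhd G C' = Y ∧
        Disjoint C C' ∧ x ∈ C ∧ x' ∈ C'} with hFib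
    have hcover : S ⊆ ⋃ x ∈ G.neighborSet f, ⋃ x' ∈ G.neighborSet f, Fib x x' := by
      rintro Y ⟨⟨C, C', hC, hnC, hC', hnC', hdisj⟩, _, hFY⟩
      have hfY : f ∈ Y := hFY hfF
      obtain ⟨hfC, x, hxC, hadjx⟩ : f ∈ nbhd G C := hnC ▸ hfY
      obtain ⟨hfC', x', hxC', hadjx'⟩ : f ∈ nbhd G C' := hnC' ▸ hfY
      exact Set.mem_biUnion hadjx (Set.mem_biUnion hadjx'
        ⟨C, C', hC, hnC, hC', hnC', hdisj, hxC, hxC'⟩)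
    obtain ⟨x, hx, hx2⟩ := exists_infinite_of_subset_biUnion (hlf f) hinf hcover
    obtain ⟨x', hx', hx'2⟩ := exists_infinite_of_subset_biUnion (hlf f) hx2
      Set.inter_subset_right
    have hSS : (S ∩ Fib x x').Infinite := hx'2.mono (fun Y hY => ⟨hY.1.1, hY.2⟩)
    clear hx2 hx'2 hcover hinf
    -- Each Y in S ∩ Fib x x' separates x from x'.
    have hsep : ∀ Y ∈ S ∩ Fib x x', ∀ p : G.Walk x x', ∃ u ∈ p.support, u ∈ Y := by
      rintro Y ⟨_, C, C', hC, hnC, hC', hnC', hdisj, hxC, hxC'⟩ p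
      by_contra hav
      push_neg at hav
      have har : AvoidReach G Y x x' := ⟨p, hav⟩
      have hx'C : x' ∈ C := by
        rw [isCompOf_eq_comp hC hxC]
        exact har
      exact (Set.disjoint_left.mp hdisj hx'C) hxC'
    by_cases hreach : AvoidReach G F x x'
    · -- pigeonhole on the support of an F-avoiding x–x' walk
      obtain ⟨p, hp⟩ := hreach
      have hcover2 : S ∩ Fib x x' ⊆ ⋃ u ∈ {u | u ∈ p.support},
          {Y : Set V | TightPair G Y ∧ Y.encard ≤ n ∧ insert u F ⊆ Y} := by
        intro Y hY
        obtain ⟨u, hu, huY⟩ := hsep Y hY p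
        refine Set.mem_biUnion hu ⟨hY.1.1, hY.1.2.1, ?_⟩
        rw [Set.insert_subset_iff]
        exact ⟨huY, hY.1.2.2⟩
      refine hSS (Set.Finite.subset (Set.Finite.biUnion p.support.finite_toSet
        (fun u hu => ?_)) hcover2)
      -- finite by induction hypothesis
      · apply ih (insert u F) (hF.insert u) ⟨u, Set.mem_insert u F⟩
        rw [Set.encard_insert_of_notMem (hp u hu)]
        calc (n : ℕ∞) ≤ F.encard + (m + 1 : ℕ) := hcard
          _ = F.encard + 1 + m := by push_cast; ring
    · -- all Y in the fibre equal F
      apply hSS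
      apply Set.Finite.subset (Set.finite_singleton F)
      rintro Y ⟨⟨_, hYcard, hFY⟩, C, C', hC, hnC, hC', hnC', hdisj, hxC, hxC'⟩
      have hYF : Y ⊆ F := by
        intro y hy
        by_contra hyF
        exfalso
        apply hreach
        have h1 : AvoidReach G F x y := by
          obtain ⟨hyC, c, hcC, hadj⟩ : y ∈ nbhd G C := hnC ▸ hy
          have : AvoidReach G Y x c := by
            have := isCompOf_eq_comp hC hxC ▸ hcC
            exact this
          exact ar_adj (ar_mono hFY this) hadj.symm hyF
        have h2 : AvoidReach G F x' y := by
          obtain ⟨hyC', c, hcC', hadj⟩ : y ∈ nbhd G C' := hnC' ▸ hy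
          have : AvoidReach G Y x' c := by
            have := isCompOf_eq_comp hC' hxC' ▸ hcC'
            exact this
          exact ar_adj (ar_mono hFY this) hadj.symm hyF
        exact ar_trans h1 (ar_symm h2)
      exact Set.Subset.antisymm hYF hFY

/-! ### The nestedness lemma -/

lemma tight_sep_nonempty (hG : G.Connected) {t : GraphSep G} (ht : IsTight t) :
    t.sepSet.Nonempty := by
  by_contra h
  rw [Set.not_nonempty_iff_eq_empty] at h
  obtain ⟨⟨C0, hC0, hn0, hs0⟩, ⟨D0, hD0, hn1, hs1⟩⟩ := ht
  have h0 : C0 = Set.univ := eq_univ_of_nbhd_empty hG (comp_nonempty hC0) (by rw [hn0, h])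
  have h1 : D0 = Set.univ := eq_univ_of_nbhd_empty hG (comp_nonempty hD0) (by rw [hn1, h])
  obtain ⟨v⟩ := hG.nonempty
  have hv0 : v ∈ t.A \ t.B := hs0 (h0 ▸ Set.mem_univ v)
  have hv1 : v ∈ t.B \ t.A := hs1 (h1 ▸ Set.mem_univ v)
  exact hv1.2 hv0.1

lemma nested_inv_left {s t : GraphSep G} (h : Nested t.inv s) : Nested t s := by
  unfold Nested at h ⊢
  rw [inv_inv] at h
  tauto

/-- If the separator of `s` avoids `t.A` entirely and the `t.A`-side of `t` is tight,
then `t` is nested with `s`. -/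
lemma nested_of_empty_inter (hG : G.Connected) (s t : GraphSep G)
    (hYne : t.sepSet.Nonempty)
    (hXA : ∀ u ∈ s.sepSet, u ∉ t.A)
    (hC0 : ∃ C, IsCompOf G t.sepSet C ∧ nbhd G C = t.sepSet ∧ C ⊆ t.A \ t.B) :
    Nested t s := by
  obtain ⟨C0, hC0comp, hC0n, hC0sub⟩ := hC0
  obtain ⟨v0, hv0⟩ := comp_nonempty hC0comp
  have hC0X : ∀ u ∈ C0, u ∉ s.sepSet := fun u hu hX => hXA u hX (hC0sub hu).1
  have hv0Y : v0 ∉ t.sepSet := isCompOf_disjoint hC0comp v0 hv0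
  have hv0X : v0 ∉ s.sepSet := hC0X v0 hv0
  have hC0eq : C0 = comp G t.sepSet v0 := isCompOf_eq_comp hC0comp hv0
  set X := s.sepSet with hX
  set Y := t.sepSet with hY
  set K := comp G X v0 with hK
  have hC0K : C0 ⊆ K := by
    rw [hC0eq]
    exact comp_subset_comp (fun u hu => hC0X u (hC0eq ▸ hu)) hv0Y
  have hYsubA : Y ⊆ t.A := Set.inter_subset_left
  have hYX : ∀ y ∈ Y, y ∉ X := fun y hy hX' => hXA y hX' (hYsubA hy)
  have hYK : Y ⊆ K := by
    intro y hy
    obtain ⟨hyC0, c, hcC0, hadj⟩ : y ∈ nbhd G C0 := hC0n ▸ hy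
    exact ar_adj (hC0K hcC0) hadj.symm (hYX y hy)
  have hAK : t.A \ t.B ⊆ K := by
    rintro u ⟨huA, huB⟩
    have huY : u ∉ Y := fun h => huB h.2
    have huX : u ∉ X := fun hX' => hXA u hX' huA
    set Q := comp G Y u with hQ
    have hQside : Q ⊆ t.A \ t.B := comp_subset_side t ⟨huA, huB⟩
    have hQX : ∀ w ∈ Q, w ∉ X := fun w hw hX' => hXA w hX' (hQside hw).1
    have hQne : Q.Nonempty := ⟨u, mem_comp_self huY⟩
    have hQproper : Q ≠ Set.univ := by
      intro h
      obtain ⟨y0, hy0⟩ := hYne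
      exact comp_disjoint (show y0 ∈ Q from h ▸ Set.mem_univ y0) hy0
    obtain ⟨y', hy'⟩ := nbhd_nonempty hG hQne hQproper
    have hy'Y : y' ∈ Y := nbhd_comp_subset (comp_isCompOf huY) hy'
    obtain ⟨hy'Q, q, hqQ, hadj'⟩ := hy'
    have hqK : q ∈ K := ar_adj (hYK hy'Y) hadj' (hQX q hqQ)
    have hQsub : Q ⊆ comp G X u := comp_subset_comp hQX huY
    have h1 : comp G X q = comp G X u := comp_eq_of_mem (hQsub hqQ)
    have h2 : comp G X q = K := comp_eq_of_mem hqK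
    have : u ∈ comp G X u := mem_comp_self huX
    rw [← h1, h2] at this
    exact this
  have htAK : t.A ⊆ K := by
    intro a ha
    by_cases haB : a ∈ t.B
    · exact hYK ⟨ha, haB⟩
    · exact hAK ⟨ha, haB⟩
  rcases side_or s hv0X with hside | hside
  · have hKside : K ⊆ s.A \ s.B := comp_subset_side s hside
    exact Or.inl ⟨fun a ha => (hKside (htAK ha)).1, fun b hb => by
      rcases t.mem_A_or_B b with h | h
      · exact absurd hb (hKside (htAK h)).2
      · exact h⟩
  · have hKside : K ⊆ s.B \ s.A := comp_subset_sideB s hside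
    refine Or.inr (Or.inl ⟨fun a ha => (hKside (htAK ha)).1, fun b hb => ?_⟩)
    rcases t.mem_A_or_B b with h | h
    · exact absurd (show b ∈ s.A from hb) (hKside (htAK h)).2
    · exact h

end Stmt16

open GraphSep in
/-- in a locally finite connected graph, a separation efficiently
distinguishing two regular profiles crosses only finitely many tight separations of
at most its order. -/
theorem stmt16 {V : Type} (G : SimpleGraph V) (hG : G.Connected)
    (hlf : ∀ v : V, (G.neighborSet v).Finite)
    (s : GraphSep G) (hfin : s.order < ⊤)
    (heff : ∃ P P' : Set (GraphSep G), IsProfileIn G P ∧ IsProfileIn G P' ∧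
      RegularP P ∧ RegularP P' ∧ EffDist s P P') :
    {t : GraphSep G | IsTight t ∧ t.order ≤ s.order ∧ ¬ Nested t s}.Finite := by
  classical
  obtain ⟨P, P', hP, hP', hregP, hregP', hdist, _⟩ := heff
  have hXfin : s.sepSet.Finite := Set.encard_lt_top_iff.mp hfin
  obtain ⟨n, hn⟩ := WithTop.ne_top_iff_exists.mp hfin.ne
  -- a fixed walk between each pair of vertices
  have hreach : ∀ x x' : V, ∃ _ : G.Walk x x', True :=
    fun x x' => ⟨(hG.preconnected x x').some, trivial⟩
  choose wlk _ using hreach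
  set W : Set V := s.sepSet ∪ ⋃ x ∈ s.sepSet, ⋃ x' ∈ s.sepSet,
    {u | u ∈ (wlk x x').support} with hW
  have hWfin : W.Finite :=
    hXfin.union (Set.Finite.biUnion hXfin (fun x _ =>
      Set.Finite.biUnion hXfin (fun x' _ => List.finite_toSet _)))
  -- every relevant separation has its separator meeting W
  have key : ∀ t : GraphSep G, IsTight t → ¬ Nested t s → ∃ w ∈ W, w ∈ t.sepSet := by
    intro t ht hnest
    by_cases h1 : ∃ w, w ∈ t.sepSet ∧ w ∈ s.sepSet
    · obtain ⟨w, hw1, hw2⟩ := h1; exact ⟨w, Or.inl hw2, hw1⟩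
    push_neg at h1
    by_cases h2 : ∃ x, x ∈ s.sepSet ∧ x ∈ t.A
    swap
    · push_neg at h2
      exact absurd (Stmt16.nested_of_empty_inter hG s t
        (Stmt16.tight_sep_nonempty hG ht) h2 ht.1) hnest
    by_cases h3 : ∃ x', x' ∈ s.sepSet ∧ x' ∈ t.B
    swap
    · push_neg at h3
      refine absurd (Stmt16.nested_inv_left
        (Stmt16.nested_of_empty_inter hG s t.inv ?_ ?_ ?_)) hnest
      · rw [Stmt16.sepSet_inv]; exact Stmt16.tight_sep_nonempty hG ht
      · exact h3
      · rw [Stmt16.sepSet_inv]; exact ht.2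
    obtain ⟨x, hxX, hxA⟩ := h2
    obtain ⟨x', hx'X, hx'B⟩ := h3
    have hxY : x ∉ t.sepSet := fun h => h1 x h hxX
    have hx'Y : x' ∉ t.sepSet := fun h => h1 x' h hx'X
    have hxside : x ∈ t.A \ t.B := ⟨hxA, fun h => hxY ⟨hxA, h⟩⟩
    have hx'side : x' ∈ t.B \ t.A := ⟨hx'B, fun h => hx'Y ⟨h, hx'B⟩⟩
    have hex : ∃ u ∈ (wlk x x').support, u ∈ t.sepSet := by
      by_contra hav
      push_neg at hav
      have hmem : x' ∈ Stmt16.comp G t.sepSet x := ⟨wlk x x', hav⟩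
      exact (Stmt16.comp_subset_side t hxside hmem).2 hx'side.1
    obtain ⟨u, hu, huY⟩ := hex
    exact ⟨u, Or.inr (Set.mem_biUnion hxX (Set.mem_biUnion hx'X hu)), huY⟩
  -- tight separations give tight pairs
  have htp : ∀ t : GraphSep G, IsTight t → Stmt16.TightPair G t.sepSet := by
    rintro t ⟨⟨C0, hC0, hn0, hs0⟩, ⟨D0, hD0, hn1, hs1⟩⟩
    refine ⟨C0, D0, hC0, hn0, hD0, hn1, Set.disjoint_left.mpr ?_⟩
    intro u hu hu'
    exact (hs1 hu').2 (hs0 hu).1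
  -- assemble
  have main : {t : GraphSep G | IsTight t ∧ t.order ≤ s.order ∧ ¬ Nested t s} ⊆
      ⋃ w ∈ W, ⋃ Y ∈ {Y : Set V | Stmt16.TightPair G Y ∧ Y.encard ≤ (n : ℕ∞) ∧ {w} ⊆ Y},
        {t : GraphSep G | t.sepSet = Y} := by
    rintro t ⟨ht, hord, hnest⟩
    obtain ⟨w, hwW, hwY⟩ := key t ht hnest
    have h1 : t.sepSet ∈ {Y : Set V | Stmt16.TightPair G Y ∧ Y.encard ≤ (n : ℕ∞) ∧ {w} ⊆ Y} :=
      ⟨htp t ht, le_trans hord (le_of_eq hn.symm), Set.singleton_subset_iff.mpr hwY⟩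
    exact Set.mem_biUnion hwW (Set.mem_biUnion h1 rfl)
  refine Set.Finite.subset (Set.Finite.biUnion hWfin (fun w _ => Set.Finite.biUnion ?_
    (fun Y hY => Stmt16.fiber_finite hG hlf (Set.encard_lt_top_iff.mp
      (lt_of_le_of_lt hY.2.1 (WithTop.coe_lt_top n)))))) main
  exact Stmt16.tight_seps_finite hG hlf n n {w} (Set.finite_singleton w) ⟨w, rfl⟩
    (by rw [Set.encard_singleton]; exact le_add_self)
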